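/- Let H be a real Hilbert space, C a nonempty closed convex subset of H, T : C → C a nonexpansive map, f : C → C an α-contraction with 0 ≤ α < 1, and ε ∈ (0,1). If p ∈ C is a fixed point of T (T p = p) and ξ ∈ C satisfies ξ = ε·f(ξ) + (1−ε)·T(ξ), then (1−α)·‖ξ − p‖² ≤ ⟨f(p) − p, ξ − p⟩. -/

import Mathlib

/-- variational inequality estimate for the implicit viscosity point. -/
theorem stmt2 {H : Type*} [NormedAddCommGroup H] [InnerProductSpace ℝ H] [CompleteSpace H]
    (C : Set H) (hC_ne : C.Nonempty) (hC_closed : IsClosed C) (hC_convex : Convex ℝ C)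
    (T : H → H) (hT_maps : ∀ x ∈ C, T x ∈ C)
    (hT_nonexp : ∀ x ∈ C, ∀ y ∈ C, ‖T x - T y‖ ≤ ‖x - y‖)
    (f : H → H) (hf_maps : ∀ x ∈ C, f x ∈ C)
    (α : ℝ) (hα0 : 0 ≤ α) (hα1 : α < 1)
    (hf_contr : ∀ x ∈ C, ∀ y ∈ C, ‖f x - f y‖ ≤ α * ‖x - y‖)
    (ε : ℝ) (hε0 : 0 < ε) (hε1 : ε < 1)
    (p : H) (hp : p ∈ C) (hp_fix : T p = p)
    (ξ : H) (hξ : ξ ∈ C) (hξ_eq : ξ = ε • f ξ + (1 - ε) • T ξ) :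
    (1 - α) * ‖ξ - p‖ ^ 2 ≤ inner ℝ (f p - p) (ξ - p) := by
  have h1 : ξ - p = ε • (f ξ - p) + (1 - ε) • (T ξ - p) := by
    nth_rewrite 1 [hξ_eq]; module
  have hsq : (inner ℝ (ξ - p) (ξ - p) : ℝ) = ‖ξ - p‖ ^ 2 := by
    rw [real_inner_self_eq_norm_sq]
  have hT : (inner ℝ (T ξ - p) (ξ - p) : ℝ) ≤ ‖ξ - p‖ ^ 2 := by
    calc (inner ℝ (T ξ - p) (ξ - p) : ℝ) ≤ ‖T ξ - p‖ * ‖ξ - p‖ := real_inner_le_norm _ _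
      _ ≤ ‖ξ - p‖ * ‖ξ - p‖ := by
          apply mul_le_mul_of_nonneg_right _ (norm_nonneg _)
          have := hT_nonexp ξ hξ p hp
          rwa [hp_fix] at this
      _ = ‖ξ - p‖ ^ 2 := (sq ‖ξ - p‖).symm
  have hdecomp : ‖ξ - p‖ ^ 2 =
      ε * inner ℝ (f ξ - p) (ξ - p) + (1 - ε) * inner ℝ (T ξ - p) (ξ - p) := by
    rw [← hsq]
    nth_rewrite 1 [h1]
    rw [inner_add_left, real_inner_smul_left, real_inner_smul_left]
  have key : ‖ξ - p‖ ^ 2 ≤ inner ℝ (f ξ - p) (ξ - p) := by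
    have h2 : ε * ‖ξ - p‖ ^ 2 ≤ ε * inner ℝ (f ξ - p) (ξ - p) := by
      nlinarith [hdecomp, hT]
    exact le_of_mul_le_mul_left h2 hε0
  have hfξ : (inner ℝ (f ξ - p) (ξ - p) : ℝ)
      = inner ℝ (f ξ - f p) (ξ - p) + inner ℝ (f p - p) (ξ - p) := by
    rw [← inner_add_left]; congr 1; abel
  have hcontr : (inner ℝ (f ξ - f p) (ξ - p) : ℝ) ≤ α * ‖ξ - p‖ ^ 2 := by
    calc (inner ℝ (f ξ - f p) (ξ - p) : ℝ) ≤ ‖f ξ - f p‖ * ‖ξ - p‖ := real_inner_le_norm _ _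
      _ ≤ (α * ‖ξ - p‖) * ‖ξ - p‖ :=
          mul_le_mul_of_nonneg_right (hf_contr ξ hξ p hp) (norm_nonneg _)
      _ = α * ‖ξ - p‖ ^ 2 := by ring
  nlinarith [key, hfξ, hcontr]
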